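/- Let m and n be coprime positive integers and p a positive integer. Let x, y ∈ ℂ[[t]] be power series with ord x = m·p and ord y = n·p whose leading coefficients x₀ and y₀ satisfy y₀^m = x₀^n. Then there exists a unique pair (v, w) of power series in ℂ[[t]] with zero constant term such that v^m = x and v^n·(1 + w) = y. -/

import Mathlib

open PowerSeries


lemma mem_span_X_pow {n : ℕ} {a : PowerSeries ℂ} :
    a ∈ (Ideal.span {(X : PowerSeries ℂ)}) ^ n ↔ ∀ i < n, coeff i a = 0 := by
  rw [Ideal.span_singleton_pow, Ideal.mem_span_singleton]
  exact X_pow_dvd_iff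

lemma smod_iff (n : ℕ) (a b : PowerSeries ℂ) :
    (a ≡ b [SMOD ((Ideal.span {(X : PowerSeries ℂ)}) ^ n • ⊤ : Ideal (PowerSeries ℂ))]) ↔
      ∀ i < n, coeff i a = coeff i b := by
  rw [smul_eq_mul, Ideal.mul_top, SModEq.sub_mem, mem_span_X_pow]
  constructor
  · intro h i hi; have := h i hi; simpa [sub_eq_zero] using this
  · intro h i hi; simp [h i hi]

instance : IsHausdorff (Ideal.span {(X : PowerSeries ℂ)}) (PowerSeries ℂ) := by
  constructor
  intro x hx
  ext i
  have := (smod_iff (i + 1) x 0).1 (hx (i + 1)) i (Nat.lt_succ_self i)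
  simpa using this

instance : IsPrecomplete (Ideal.span {(X : PowerSeries ℂ)}) (PowerSeries ℂ) := by
  constructor
  intro f hf
  refine ⟨PowerSeries.mk (fun i => coeff i (f (i + 1))), ?_⟩
  intro n
  rw [smod_iff]
  intro i hi
  rcases le_or_gt n (i + 1) with h | h
  · have := (smod_iff n (f n) (f (i + 1))).1 (hf h) i hi
    simpa using this
  · have := (smod_iff (i + 1) (f (i + 1)) (f n)).1 (hf h.le) i (Nat.lt_succ_self i)
    simpa using this.symm

instance : IsAdicComplete (Ideal.span {(X : PowerSeries ℂ)}) (PowerSeries ℂ) := ⟨⟩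

lemma exists_root (m : ℕ) (hm : 0 < m) (u : PowerSeries ℂ) (s₀ : ℂ) (h0 : s₀ ≠ 0)
    (h : s₀ ^ m = constantCoeff u) :
    ∃ s : PowerSeries ℂ, constantCoeff s = s₀ ∧ s ^ m = u := by
  set I : Ideal (PowerSeries ℂ) := Ideal.span {X} with hI
  have hspan : ∀ a : PowerSeries ℂ, a ∈ I ↔ constantCoeff a = 0 := by
    intro a; rw [hI, Ideal.mem_span_singleton, X_dvd_iff]
  have hmon : (Polynomial.X ^ m - Polynomial.C u).Monic :=
    Polynomial.monic_X_pow_sub_C u hm.ne'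
  have h₁ : (Polynomial.X ^ m - Polynomial.C u).eval (C s₀) ∈ I := by
    rw [hspan]
    simp [← h]
  have h₂ : IsUnit (Ideal.Quotient.mk I
      ((Polynomial.X ^ m - Polynomial.C u).derivative.eval (C s₀))) := by
    apply IsUnit.map
    rw [isUnit_iff_constantCoeff]
    simp only [Polynomial.derivative_sub, Polynomial.derivative_C, Polynomial.derivative_X_pow,
      sub_zero, Polynomial.eval_mul, Polynomial.eval_natCast, Polynomial.eval_pow,
      Polynomial.eval_X, map_mul, map_pow, map_natCast, constantCoeff_C]
    exact IsUnit.mul (by simp [hm.ne']) (IsUnit.pow _ (Ne.isUnit h0))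
  obtain ⟨a, ha, hmem⟩ := HenselianRing.is_henselian (I := I)
    (Polynomial.X ^ m - Polynomial.C u) hmon (C s₀) h₁ h₂
  refine ⟨a, ?_, ?_⟩
  · have := (hspan _).1 hmem
    simpa [sub_eq_zero] using this
  · have h3 : a ^ m - u = 0 := by simpa [Polynomial.IsRoot] using ha
    exact sub_eq_zero.1 h3

lemma ord_pow (φ : PowerSeries ℂ) (k : ℕ) : (φ ^ k).order = (k : ℕ∞) * φ.order := by
  induction k with
  | zero => simp [order_one]
  | succ k ih =>
    rw [pow_succ, order_mul, ih]
    push_cast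
    ring

lemma root_unique (m : ℕ) (hm : 0 < m) (g : PowerSeries ℂ)
    (hg : g ^ m = 1) (h0 : constantCoeff g = 1) : g = 1 := by
  by_contra hne
  set h : PowerSeries ℂ := g - 1 with hh
  have hne' : h ≠ 0 := sub_ne_zero.2 hne
  obtain ⟨d, hd⟩ : ∃ d : ℕ, h.order = d := by
    have := order_finite_iff_ne_zero.2 hne'
    lift h.order to ℕ using this.ne with d
    exact ⟨d, rfl⟩
  obtain ⟨hcd, hlow⟩ := order_eq_nat.1 hd
  have hd1 : 1 ≤ d := by
    rcases Nat.eq_zero_or_pos d with h0' | h0'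
    · exfalso; apply hcd; rw [h0']
      simp [hh, coeff_zero_eq_constantCoeff, h0]
    · exact h0'
  have hXd : (X : PowerSeries ℂ) ^ d ∣ h := X_pow_dvd_iff.2 hlow
  have hg' : (h + 1) ^ m = 1 := by rw [hh]; simpa using hg
  have hsum := congrArg (coeff d) hg'
  rw [add_pow, map_sum] at hsum
  have hterm : ∀ k ∈ Finset.range (m + 1), k ≠ 1 →
      coeff d (h ^ k * 1 ^ (m - k) * (m.choose k : PowerSeries ℂ)) = 0 := by
    intro k _ hk1
    rcases Nat.eq_zero_or_pos k with rfl | hkpos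
    · rw [pow_zero, one_mul, one_pow, Nat.choose_zero_right, Nat.cast_one, mul_one, coeff_one,
        if_neg (by omega : ¬ d = 0)]
    · have hk2 : 2 ≤ k := by omega
      have : (X : PowerSeries ℂ) ^ (d + d) ∣ h ^ k := by
        calc (X : PowerSeries ℂ) ^ (d + d) = X ^ d * X ^ d := by rw [pow_add]
        _ ∣ h * h := mul_dvd_mul hXd hXd
        _ = h ^ 2 := (sq h).symm
        _ ∣ h ^ k := pow_dvd_pow h hk2
      have hc0 : coeff d (h ^ k) = 0 := X_pow_dvd_iff.1 this d (by omega)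
      rw [one_pow, mul_one]
      have : (m.choose k : PowerSeries ℂ) = C (m.choose k : ℂ) := by simp
      rw [this, coeff_mul_C, hc0, zero_mul]
  rw [Finset.sum_eq_single 1 hterm (by intro habs; exfalso; exact habs (Finset.mem_range.2 (by omega)))] at hsum
  simp only [pow_one, one_pow, mul_one, Nat.choose_one_right] at hsum
  have : coeff d (1 : PowerSeries ℂ) = 0 := by
    rw [coeff_one, if_neg (by omega : ¬ d = 0)]
  rw [this] at hsum
  apply hcd
  have hm' : (m : ℂ) ≠ 0 := Nat.cast_ne_zero.2 hm.ne'
  have h5 : coeff d h * (m : ℂ) = 0 := by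
    have : (m : PowerSeries ℂ) = C (m : ℂ) := by simp
    rw [this, coeff_mul_C] at hsum
    exact hsum
  exact (mul_eq_zero.1 h5).resolve_right hm'


lemma zpow_nat_helper (x : ℂ) (k : ℕ) (a : ℤ) : (x ^ a) ^ k = x ^ (a * k) := by
  rw [← zpow_natCast (x ^ a), ← zpow_mul]

lemma s0_spec (m n : ℕ) (hm : 0 < m) (a b : ℤ) (hab : a * m + b * n = 1) (x₀ y₀ : ℂ)
    (hx : x₀ ≠ 0) (hy : y₀ ≠ 0) (hl : y₀ ^ m = x₀ ^ n) :
    (x₀ ^ a * y₀ ^ b) ^ m = x₀ ∧ (x₀ ^ a * y₀ ^ b) ^ n = y₀ ∧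
      ∀ c : ℂ, c ≠ 0 → c ^ m = x₀ → c ^ n = y₀ → c = x₀ ^ a * y₀ ^ b := by
  have key : ∀ k : ℤ, x₀ ^ ((n : ℤ) * k) = y₀ ^ ((m : ℤ) * k) := by
    intro k
    rw [zpow_mul, zpow_mul, zpow_natCast, zpow_natCast, hl]
  refine ⟨?_, ?_, ?_⟩
  · calc (x₀ ^ a * y₀ ^ b) ^ m
        = x₀ ^ (a * m) * y₀ ^ ((m : ℤ) * b) := by
          rw [mul_pow, zpow_nat_helper, zpow_nat_helper, show (b * (m : ℤ)) = (m : ℤ) * b by ring]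
      _ = x₀ ^ (a * m) * x₀ ^ ((n : ℤ) * b) := by rw [← key b]
      _ = x₀ ^ (a * m + n * b) := (zpow_add₀ hx _ _).symm
      _ = x₀ ^ (1 : ℤ) := by rw [show (a * m + (n : ℤ) * b) = a * m + b * n by ring, hab]
      _ = x₀ := zpow_one x₀
  · calc (x₀ ^ a * y₀ ^ b) ^ n
        = x₀ ^ ((n : ℤ) * a) * y₀ ^ (b * n) := by
          rw [mul_pow, zpow_nat_helper, zpow_nat_helper, show (a * (n : ℤ)) = (n : ℤ) * a by ring]
      _ = y₀ ^ ((m : ℤ) * a) * y₀ ^ (b * n) := by rw [key a]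
      _ = y₀ ^ ((m : ℤ) * a + b * n) := (zpow_add₀ hy _ _).symm
      _ = y₀ ^ (1 : ℤ) := by rw [show ((m : ℤ) * a + b * n) = a * m + b * n by ring, hab]
      _ = y₀ := zpow_one y₀
  · intro c hc hcm hcn
    have : c = (c ^ m : ℂ) ^ a * (c ^ n : ℂ) ^ b := by
      rw [← zpow_natCast c m, ← zpow_natCast c n, ← zpow_mul, ← zpow_mul,
        ← zpow_add₀ hc, show ((m : ℤ) * a + n * b : ℤ) = a * m + b * n by ring, hab, zpow_one]
    rw [this, hcm, hcn]

/-- Let `m` and `n` be coprime positive integers and `p` a positive integer.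
Let `x, y ∈ ℂ[[t]]` be power series with `ord x = m·p` and `ord y = n·p` whose leading
coefficients `x₀` and `y₀` satisfy `y₀ ^ m = x₀ ^ n`. Then there exists a unique pair
`(v, w)` of power series in `ℂ[[t]]` with zero constant term such that `v ^ m = x` and
`v ^ n * (1 + w) = y`. -/
theorem stmt2 (m n p : ℕ) (hm : 0 < m) (hn : 0 < n) (hmn : Nat.Coprime m n) (hp : 0 < p)
    (x y : PowerSeries ℂ)
    (hxord : x.order = (m * p : ℕ)) (hyord : y.order = (n * p : ℕ))
    (hlead : (PowerSeries.coeff (R := ℂ) (n * p) y) ^ m = (PowerSeries.coeff (R := ℂ) (m * p) x) ^ n) :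
    ∃! vw : PowerSeries ℂ × PowerSeries ℂ,
      PowerSeries.constantCoeff (R := ℂ) vw.1 = 0 ∧ PowerSeries.constantCoeff (R := ℂ) vw.2 = 0 ∧
      vw.1 ^ m = x ∧ vw.1 ^ n * (1 + vw.2) = y := by
  classical
  obtain ⟨hx0, hxlow⟩ := order_eq_nat.1 hxord
  obtain ⟨hy0, hylow⟩ := order_eq_nat.1 hyord
  set x₀ : ℂ := coeff (m * p) x with hx₀def
  set y₀ : ℂ := coeff (n * p) y with hy₀def
  obtain ⟨u, hu⟩ : (X : PowerSeries ℂ) ^ (m * p) ∣ x := X_pow_dvd_iff.2 hxlow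
  obtain ⟨u', hu'⟩ : (X : PowerSeries ℂ) ^ (n * p) ∣ y := X_pow_dvd_iff.2 hylow
  have hcu : constantCoeff u = x₀ := by
    rw [hx₀def, hu, ← coeff_zero_eq_constantCoeff_apply,
      ← coeff_X_pow_mul u (m * p) 0, zero_add]
  have hcu' : constantCoeff u' = y₀ := by
    rw [hy₀def, hu', ← coeff_zero_eq_constantCoeff_apply,
      ← coeff_X_pow_mul u' (n * p) 0, zero_add]
  have hy0' : y₀ ≠ 0 := hy0
  obtain ⟨a, b, hab⟩ : IsCoprime (m : ℤ) (n : ℤ) := Nat.isCoprime_iff_coprime.mpr hmn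
  obtain ⟨hs₀m, hs₀n, huniq⟩ := s0_spec m n hm a b hab x₀ y₀ hx0 hy0' hlead
  set s₀ : ℂ := x₀ ^ a * y₀ ^ b with hs₀def
  have hs₀ne : s₀ ≠ 0 := by
    intro h
    rw [h, zero_pow hm.ne'] at hs₀m
    exact hx0 hs₀m.symm
  obtain ⟨s, hs0, hsm⟩ := exists_root m hm u s₀ hs₀ne (hs₀m.trans hcu.symm)
  have hcs : constantCoeff s = s₀ := hs0
  have hsn0 : constantCoeff (s ^ n) = s₀ ^ n := by rw [map_pow, hcs]
  have hsn_ne : constantCoeff (s ^ n) ≠ 0 := by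
    rw [hsn0]; exact pow_ne_zero _ hs₀ne
  set v : PowerSeries ℂ := X ^ p * s with hvdef
  set w : PowerSeries ℂ := u' * (s ^ n)⁻¹ - 1 with hwdef
  have hvm : v ^ m = x := by
    rw [hvdef, mul_pow, ← pow_mul, hsm, mul_comm p m, ← hu]
  have hvn : v ^ n * (1 + w) = y := by
    rw [hvdef, hwdef, mul_pow, ← pow_mul, mul_comm p n]
    have : (1 : PowerSeries ℂ) + (u' * (s ^ n)⁻¹ - 1) = u' * (s ^ n)⁻¹ := by ring
    rw [this, hu']
    calc X ^ (n * p) * s ^ n * (u' * (s ^ n)⁻¹)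
        = X ^ (n * p) * (s ^ n * (s ^ n)⁻¹) * u' := by ring
      _ = X ^ (n * p) * u' := by rw [PowerSeries.mul_inv_cancel _ hsn_ne, mul_one]
  have hv0 : constantCoeff v = 0 := by
    rw [hvdef, map_mul, map_pow, constantCoeff_X, zero_pow hp.ne', zero_mul]
  have hw0 : constantCoeff w = 0 := by
    rw [hwdef, map_sub, map_mul, constantCoeff_inv, hsn0, hcu', map_one, hs₀n,
      mul_inv_cancel₀ hy0', sub_self]
  refine ⟨⟨v, w⟩, ⟨hv0, hw0, hvm, hvn⟩, ?_⟩
  rintro ⟨v', w'⟩ ⟨hv'0, hw'0, hv'm, hv'n⟩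
  simp only at hv'0 hw'0 hv'm hv'n ⊢
  -- v' has order p
  have hxne : x ≠ 0 := by
    intro h; apply hx0; rw [hx₀def, h, map_zero]
  have hv'ne : v' ≠ 0 := by
    intro h; apply hxne; rw [← hv'm, h, zero_pow hm.ne']
  have hordv' : (m : ℕ∞) * v'.order = ((m * p : ℕ) : ℕ∞) := by
    rw [← ord_pow, hv'm, hxord]
  obtain ⟨d, hd⟩ : ∃ d : ℕ, v'.order = d := by
    lift v'.order to ℕ using (order_finite_iff_ne_zero.2 hv'ne).ne with d
    exact ⟨d, rfl⟩
  have hdp : d = p := by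
    rw [hd] at hordv'
    have : ((m * d : ℕ) : ℕ∞) = ((m * p : ℕ) : ℕ∞) := by push_cast; exact hordv'
    have := Nat.cast_injective this
    exact Nat.eq_of_mul_eq_mul_left hm this
  obtain ⟨s', hs'⟩ : (X : PowerSeries ℂ) ^ p ∣ v' := by
    apply X_pow_dvd_iff.2
    intro i hi
    exact coeff_of_lt_order i (by rw [hd, hdp]; exact_mod_cast hi)
  have hXmp : (X : PowerSeries ℂ) ^ (m * p) ≠ 0 := pow_ne_zero _ X_ne_zero
  have hXnp : (X : PowerSeries ℂ) ^ (n * p) ≠ 0 := pow_ne_zero _ X_ne_zero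
  have hs'm : s' ^ m = u := by
    apply mul_left_cancel₀ hXmp
    rw [← hu, ← hv'm, hs', mul_pow, ← pow_mul, mul_comm p m]
  have hs'n : s' ^ n * (1 + w') = u' := by
    apply mul_left_cancel₀ hXnp
    calc X ^ (n * p) * (s' ^ n * (1 + w'))
        = (X ^ p * s') ^ n * (1 + w') := by rw [mul_pow, ← pow_mul, mul_comm p n, mul_assoc]
      _ = y := by rw [← hs', hv'n]
      _ = X ^ (n * p) * u' := hu'
  set c : ℂ := constantCoeff s' with hcdef
  have hcm : c ^ m = x₀ := by rw [hcdef, ← map_pow, hs'm, hcu]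
  have hcn : c ^ n = y₀ := by
    have := congrArg constantCoeff hs'n
    rw [map_mul, map_pow, map_add, map_one, hw'0, add_zero, mul_one, hcu'] at this
    exact this
  have hcne : c ≠ 0 := by
    intro h; apply hx0; rw [← hcm, h, zero_pow hm.ne']
  have hcs₀ : c = s₀ := huniq c hcne hcm hcn
  -- s' = s
  have hsne : s ≠ 0 := by
    intro h; apply hs₀ne; rw [← hcs, h, map_zero]
  have hcsne : constantCoeff s ≠ 0 := by rw [hcs]; exact hs₀ne
  have hg : (s' * s⁻¹) ^ m = 1 := by
    rw [mul_pow, hs'm, ← hsm]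
    have : s ^ m * (s⁻¹) ^ m = (s * s⁻¹) ^ m := by rw [mul_pow]
    rw [this, PowerSeries.mul_inv_cancel _ hcsne, one_pow]
  have hg0 : constantCoeff (s' * s⁻¹) = 1 := by
    rw [map_mul, constantCoeff_inv, ← hcdef, hcs₀, hcs, mul_inv_cancel₀ hs₀ne]
  have hss : s' = s := by
    have h1 : s' * s⁻¹ = 1 := root_unique m hm _ hg hg0
    calc s' = s' * (s⁻¹ * s) := by rw [PowerSeries.inv_mul_cancel _ hcsne, mul_one]
      _ = s' * s⁻¹ * s := by ring
      _ = s := by rw [h1, one_mul]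
  have hvv : v' = v := by rw [hs', hss, hvdef]
  have hww : w' = w := by
    have hvne : v ^ n ≠ 0 :=
      pow_ne_zero _ (mul_ne_zero (pow_ne_zero _ X_ne_zero) hsne)
    have h2 : v ^ n * (1 + w') = v ^ n * (1 + w) := by
      rw [← hvv, hv'n, ← hvn, hvv]
    exact add_left_cancel (mul_left_cancel₀ hvne h2)
  rw [Prod.mk.injEq]
  exact ⟨hvv, hww⟩
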